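/- Let ρ be a non-degenerate density matrix. The map σ ↦ c_ρ(σ) is a bijection from the set of non-degenerate density matrices onto the set of Hermitian n×n matrices A satisfying Tr ρA = 0; the inverse sends A to exp(log ρ + A) / Tr exp(log ρ + A). -/

import Mathlib

open MeasureTheory
open scoped ComplexOrder

attribute [local instance] Matrix.frobeniusNormedAddCommGroup Matrix.frobeniusNormedSpace

variable {n : ℕ}

/-- The matrix exponential. -/
noncomputable def mexp (A : Matrix (Fin n) (Fin n) ℂ) : Matrix (Fin n) (Fin n) ℂ :=
  NormedSpace.exp A

/-- The matrix logarithm, defined by (real) functional calculus; meaningful on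
positive definite matrices. -/
noncomputable def mlog (A : Matrix (Fin n) (Fin n) ℂ) : Matrix (Fin n) (Fin n) ℂ :=
  cfc Real.log A

/-- Real powers of a matrix, defined by (real) functional calculus; meaningful on
positive definite matrices. -/
noncomputable def mpow (A : Matrix (Fin n) (Fin n) ℂ) (u : ℝ) : Matrix (Fin n) (Fin n) ℂ :=
  cfc (fun x : ℝ => x ^ u) A

/-- Umegaki's relative entropy `D(ρ‖σ) = Tr ρ (log ρ - log σ)` (a real number). -/
noncomputable def relEnt (ρ σ : Matrix (Fin n) (Fin n) ℂ) : ℝ :=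
  (Matrix.trace (ρ * (mlog ρ - mlog σ))).re

/-- The Kubo transform `[A]^K_ρ = ∫₀¹ ρ^u A ρ^(1-u) du` (entrywise Bochner integral). -/
noncomputable def kubo (ρ A : Matrix (Fin n) (Fin n) ℂ) : Matrix (Fin n) (Fin n) ℂ :=
  ∫ u in (0:ℝ)..1, mpow ρ u * A * mpow ρ (1 - u)

/-- The chart centered at `ρ`: `c_ρ(σ) = log σ - log ρ + D(ρ‖σ)·I`. -/
noncomputable def chart (ρ σ : Matrix (Fin n) (Fin n) ℂ) : Matrix (Fin n) (Fin n) ℂ :=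
  mlog σ - mlog ρ + relEnt ρ σ • (1 : Matrix (Fin n) (Fin n) ℂ)

/-- The normalization `α(t) = log Tr exp((1-t)·log ρ + t·log σ)` of the exponential arc. -/
noncomputable def alpha (ρ σ : Matrix (Fin n) (Fin n) ℂ) (t : ℝ) : ℝ :=
  Real.log (Matrix.trace (mexp ((1 - t) • mlog ρ + t • mlog σ))).re

/-- The exponential arc connecting `σ` to `ρ`:
`σ_t = exp((1-t)·log ρ + t·log σ - α(t)·I)`. -/
noncomputable def arc (ρ σ : Matrix (Fin n) (Fin n) ℂ) (t : ℝ) : Matrix (Fin n) (Fin n) ℂ :=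
  mexp ((1 - t) • mlog ρ + t • mlog σ - alpha ρ σ t • (1 : Matrix (Fin n) (Fin n) ℂ))

/-- The potential `Φ_ρ(A) = log Tr exp(log ρ + A)`. -/
noncomputable def potential (ρ A : Matrix (Fin n) (Fin n) ℂ) : ℝ :=
  Real.log (Matrix.trace (mexp (mlog ρ + A))).re

/-- The density matrix `τ_A = exp(log ρ + A) / Tr exp(log ρ + A)`. -/
noncomputable def tauOf (ρ A : Matrix (Fin n) (Fin n) ℂ) : Matrix (Fin n) (Fin n) ℂ :=
  (Matrix.trace (mexp (mlog ρ + A)))⁻¹ • mexp (mlog ρ + A)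

section Aux

attribute [local instance] Matrix.frobeniusNormedRing Matrix.frobeniusNormedAlgebra

lemma mlog_isSelfAdjoint (A : Matrix (Fin n) (Fin n) ℂ) : IsSelfAdjoint (mlog A) :=
  cfc_predicate _ A

lemma mexp_eq_cfc {A : Matrix (Fin n) (Fin n) ℂ} (hA : A.IsHermitian) :
    mexp A = cfc Real.exp A := by
  rw [mexp]
  exact (@CFC.real_exp_eq_normedSpace_exp _ _ _ _ Matrix.IsHermitian.instContinuousFunctionalCalculus A hA).symm

lemma trace_cfc' (f : ℝ → ℝ) {A : Matrix (Fin n) (Fin n) ℂ} (hA : A.IsHermitian) :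
    (cfc f A).trace = ∑ i, (f (hA.eigenvalues i) : ℂ) := by
  rw [hA.cfc_eq, Matrix.IsHermitian.cfc, Unitary.conjStarAlgAut_apply, Matrix.trace_mul_cycle,
    Unitary.coe_star_mul_self, one_mul, Matrix.trace_diagonal]
  rfl

lemma trace_mexp {A : Matrix (Fin n) (Fin n) ℂ} (hA : A.IsHermitian) :
    (mexp A).trace = ((∑ i, Real.exp (hA.eigenvalues i) : ℝ) : ℂ) := by
  rw [mexp_eq_cfc hA, trace_cfc' Real.exp hA]
  push_cast
  rfl

open Matrix in
open Matrix in
lemma posDef_conj {D : Matrix (Fin n) (Fin n) ℂ} (hD : D.PosDef)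
    {B : Matrix (Fin n) (Fin n) ℂ} (hB : IsUnit B) : (Bᴴ * D * B).PosDef := by
  exact hD.conjTranspose_mul_mul_same (Matrix.mulVec_injective_of_isUnit hB)

open Matrix in
lemma mexp_posDef {A : Matrix (Fin n) (Fin n) ℂ} (hA : A.IsHermitian) : (mexp A).PosDef := by
  rw [mexp_eq_cfc hA, hA.cfc_eq, Matrix.IsHermitian.cfc, Unitary.conjStarAlgAut_apply]
  have hD : (Matrix.diagonal (RCLike.ofReal ∘ Real.exp ∘ hA.eigenvalues) :
      Matrix (Fin n) (Fin n) ℂ).PosDef :=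
    Matrix.posDef_diagonal_iff.mpr fun i => by
      simpa using Complex.zero_lt_real.mpr (Real.exp_pos _)
  have hU : IsUnit ((Matrix.IsHermitian.eigenvectorUnitary hA : Matrix (Fin n) (Fin n) ℂ)) :=
    (Unitary.toUnits (Matrix.IsHermitian.eigenvectorUnitary hA)).isUnit
  have hU' : IsUnit (star ((Matrix.IsHermitian.eigenvectorUnitary hA : Matrix (Fin n) (Fin n) ℂ))) :=
    hU.star
  have h := posDef_conj hD hU'
  rw [Matrix.star_eq_conjTranspose, Matrix.conjTranspose_conjTranspose] at h
  rw [Matrix.star_eq_conjTranspose]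
  exact h

lemma spectrum_pos_of_posDef {σ : Matrix (Fin n) (Fin n) ℂ} (hσ : σ.PosDef) :
    ∀ x ∈ spectrum ℝ σ, 0 < x := by
  rw [Matrix.IsHermitian.spectrum_real_eq_range_eigenvalues hσ.1]
  rintro x ⟨i, rfl⟩
  exact hσ.eigenvalues_pos i

open scoped MatrixOrder in
lemma mexp_mlog {σ : Matrix (Fin n) (Fin n) ℂ} (hσ : σ.PosDef) : mexp (mlog σ) = σ := by
  have h1 : IsSelfAdjoint σ := hσ.1
  rw [mexp]
  exact @CFC.exp_log _ _ _ _ Matrix.IsHermitian.instContinuousFunctionalCalculus _ _ _ σ (Matrix.isStrictlyPositive_iff_posDef.mpr hσ)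

lemma mlog_mexp {A : Matrix (Fin n) (Fin n) ℂ} (hA : A.IsHermitian) : mlog (mexp A) = A := by
  rw [mexp]
  exact @CFC.log_exp _ _ _ _ Matrix.IsHermitian.instContinuousFunctionalCalculus A hA

lemma smul_one_isSelfAdjoint (r : ℝ) :
    IsSelfAdjoint (r • (1 : Matrix (Fin n) (Fin n) ℂ)) := by
  rw [IsSelfAdjoint, star_smul, star_trivial, star_one]

lemma real_smul_eq (r : ℝ) (X : Matrix (Fin n) (Fin n) ℂ) : (r : ℂ) • X = r • X := by
  rw [show ((r : ℂ)) = algebraMap ℝ ℂ r from rfl, algebraMap_smul]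

lemma mexp_add_smul_one (A : Matrix (Fin n) (Fin n) ℂ) (c : ℝ) :
    mexp (A + c • (1 : Matrix (Fin n) (Fin n) ℂ)) = Real.exp c • mexp A := by
  have hcomm : Commute A (c • (1 : Matrix (Fin n) (Fin n) ℂ)) :=
    (Commute.one_right A).smul_right c
  erw [mexp, NormedSpace.exp_add_of_commute hcomm]
  have h1 : (c • (1 : Matrix (Fin n) (Fin n) ℂ)) = algebraMap ℂ _ (c : ℂ) := by
    rw [Algebra.algebraMap_eq_smul_one, real_smul_eq]
  rw [h1, ← NormedSpace.algebraMap_exp_comm, Algebra.algebraMap_eq_smul_one, mul_smul_comm,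
    mul_one, ← Complex.exp_eq_exp_ℂ, ← Complex.ofReal_exp, real_smul_eq]
  rfl

end Aux

section Main

attribute [local instance] Matrix.frobeniusNormedRing Matrix.frobeniusNormedAlgebra

lemma trace_mul_real {P Q : Matrix (Fin n) (Fin n) ℂ} (hP : P.IsHermitian) (hQ : Q.IsHermitian) :
    (((P * Q).trace.re : ℝ) : ℂ) = (P * Q).trace := by
  have h : (starRingEnd ℂ) ((P * Q).trace) = (P * Q).trace := by
    have := Matrix.trace_conjTranspose (P * Q)
    rw [Matrix.conjTranspose_mul, hP.eq, hQ.eq, Matrix.trace_mul_comm] at this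
    exact (this.symm : star (P * Q).trace = _)
  exact Complex.conj_eq_iff_re.mp h

/-- `σ ↦ c_ρ(σ)` is a bijection from the non-degenerate density matrices
onto the Hermitian matrices `A` with `Tr ρA = 0`, with inverse
`A ↦ exp(log ρ + A)/Tr exp(log ρ + A)`. -/
theorem stmt9 (n : ℕ) (hn : 1 ≤ n) (ρ : Matrix (Fin n) (Fin n) ℂ)
    (hρ : ρ.PosDef) (hρ1 : ρ.trace = 1) :
    Set.BijOn (chart ρ) {σ | σ.PosDef ∧ σ.trace = 1}
      {A | A.IsHermitian ∧ (ρ * A).trace = 0} ∧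
    Set.InvOn (tauOf ρ) (chart ρ) {σ | σ.PosDef ∧ σ.trace = 1}
      {A | A.IsHermitian ∧ (ρ * A).trace = 0} := by
  haveI : Nonempty (Fin n) := ⟨⟨0, hn⟩⟩
  have hρH : ρ.IsHermitian := hρ.1
  have tr_pos : ∀ (H : Matrix (Fin n) (Fin n) ℂ), H.IsHermitian →
      ∃ c : ℝ, 0 < c ∧ (mexp H).trace = (c : ℂ) := fun H hH =>
    ⟨∑ i, Real.exp (hH.eigenvalues i),
      Finset.sum_pos (fun i _ => Real.exp_pos _) Finset.univ_nonempty, trace_mexp hH⟩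
  have hMapsTo : Set.MapsTo (chart ρ) {σ | σ.PosDef ∧ σ.trace = 1}
      {A | A.IsHermitian ∧ (ρ * A).trace = 0} := by
    rintro σ ⟨hσ, hσ1⟩
    refine ⟨((mlog_isSelfAdjoint σ).sub (mlog_isSelfAdjoint ρ)).add (smul_one_isSelfAdjoint _), ?_⟩
    have hreal := trace_mul_real hρH ((mlog_isSelfAdjoint ρ).sub (mlog_isSelfAdjoint σ))
    unfold chart relEnt
    rw [mul_add, Matrix.trace_add, Matrix.mul_smul, mul_one, Matrix.trace_smul, hρ1,
      Complex.real_smul, mul_one, hreal, mul_sub, Matrix.trace_sub, mul_sub, Matrix.trace_sub]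
    ring
  have hLeft : ∀ σ ∈ {σ : Matrix (Fin n) (Fin n) ℂ | σ.PosDef ∧ σ.trace = 1},
      tauOf ρ (chart ρ σ) = σ := by
    rintro σ ⟨hσ, hσ1⟩
    have key : mlog ρ + chart ρ σ = mlog σ + relEnt ρ σ • 1 := by unfold chart; abel
    rw [tauOf, key, mexp_add_smul_one, mexp_mlog hσ, Matrix.trace_smul, hσ1,
      Complex.real_smul, mul_one, ← real_smul_eq, smul_smul,
      inv_mul_cancel₀ (Complex.ofReal_ne_zero.mpr (Real.exp_ne_zero _)), one_smul]
  have hMaps2 : Set.MapsTo (tauOf ρ) {A | A.IsHermitian ∧ (ρ * A).trace = 0}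
      {σ | σ.PosDef ∧ σ.trace = 1} := by
    rintro A ⟨hAH, hA0⟩
    have hH : (mlog ρ + A).IsHermitian := (mlog_isSelfAdjoint ρ).add hAH
    obtain ⟨c, hc, htr⟩ := tr_pos _ hH
    have key : tauOf ρ A = mexp (mlog ρ + A + (-Real.log c) • 1) := by
      rw [tauOf, mexp_add_smul_one, Real.exp_neg, Real.exp_log hc, htr, ← Complex.ofReal_inv,
        real_smul_eq]
    refine ⟨?_, ?_⟩
    · rw [key]; exact mexp_posDef (hH.add (smul_one_isSelfAdjoint _))
    · rw [tauOf, Matrix.trace_smul, htr, smul_eq_mul,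
        inv_mul_cancel₀ (Complex.ofReal_ne_zero.mpr hc.ne')]
  have hRight : ∀ A ∈ {A : Matrix (Fin n) (Fin n) ℂ | A.IsHermitian ∧ (ρ * A).trace = 0},
      chart ρ (tauOf ρ A) = A := by
    rintro A ⟨hAH, hA0⟩
    have hH : (mlog ρ + A).IsHermitian := (mlog_isSelfAdjoint ρ).add hAH
    obtain ⟨c, hc, htr⟩ := tr_pos _ hH
    have key : tauOf ρ A = mexp (mlog ρ + A + (-Real.log c) • 1) := by
      rw [tauOf, mexp_add_smul_one, Real.exp_neg, Real.exp_log hc, htr, ← Complex.ofReal_inv,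
        real_smul_eq]
    have hmlog : mlog (tauOf ρ A) = mlog ρ + A + (-Real.log c) • 1 := by
      rw [key, mlog_mexp (hH.add (smul_one_isSelfAdjoint _))]
    have hrel : relEnt ρ (tauOf ρ A) = Real.log c := by
      unfold relEnt
      rw [hmlog]
      have h2 : mlog ρ - (mlog ρ + A + (-Real.log c) • 1) =
          Real.log c • (1 : Matrix (Fin n) (Fin n) ℂ) - A := by
        rw [neg_smul]; abel
      rw [h2, mul_sub, Matrix.mul_smul, mul_one, Matrix.trace_sub, Matrix.trace_smul, hρ1, hA0,
        sub_zero, Complex.real_smul, mul_one, Complex.ofReal_re]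
    unfold chart
    rw [hmlog, hrel, neg_smul]
    abel
  have hinv : Set.InvOn (tauOf ρ) (chart ρ) {σ | σ.PosDef ∧ σ.trace = 1}
      {A | A.IsHermitian ∧ (ρ * A).trace = 0} := ⟨hLeft, hRight⟩
  exact ⟨hinv.bijOn hMapsTo hMaps2, hinv⟩


end Main
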